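/- For L > 0 the q-trinomial coefficient satisfies the recurrence T(n,d,L) = q^{L-d} T(n+1, d-1, L-1) + T(n, d, L-1) + q^{L+d-n} T(n, d+1, L-1). -/

import Mathlib

/- `qq` plays the role of the formal variable `q`, as an element of the
field of rational functions over `ℚ`. -/
noncomputable def qq : RatFunc ℚ := RatFunc.X

/-- `(q)_n = ∏_{i=1}^n (1 - q^i)`. -/
noncomputable def qp (n : ℕ) : RatFunc ℚ := ∏ i ∈ Finset.range n, (1 - qq ^ (i + 1))

/-- `(q)_n` for an integer index, declared to be `0` for negative `n`
(so that terms with a negative factorial index vanish upon division). -/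
noncomputable def qpz (n : ℤ) : RatFunc ℚ := if 0 ≤ n then qp n.toNat else 0

/-- The Andrews–Baxter `q`-trinomial coefficient
`T(n,d,L) = Σ_k q^{k(k+d-n)} (q)_L / ((q)_k (q)_{k+d} (q)_{L-2k-d})`,
where terms with a negative factorial index are zero.  (Any term with a
nonzero contribution has `k ≤ L`, so the range below suffices.) -/
noncomputable def qT (n d : ℤ) (L : ℕ) : RatFunc ℚ :=
  ∑ k ∈ Finset.range (L + 1),
    qq ^ ((k : ℤ) * ((k : ℤ) + d - n)) * qp L /
      (qp k * qpz ((k : ℤ) + d) * qpz ((L : ℤ) - 2 * k - d))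

lemma qq_ne_zero : qq ≠ 0 := RatFunc.X_ne_zero

lemma one_sub_qq_pow_ne_zero (m : ℕ) (hm : 0 < m) : (1 : RatFunc ℚ) - qq ^ m ≠ 0 := by
  intro h
  have h1 : (qq : RatFunc ℚ) ^ m = 1 := by linear_combination -h
  have h2 : algebraMap (Polynomial ℚ) (RatFunc ℚ) (Polynomial.X ^ m) =
      algebraMap (Polynomial ℚ) (RatFunc ℚ) 1 := by
    simpa [qq, RatFunc.algebraMap_X] using h1
  have h3 := RatFunc.algebraMap_injective ℚ h2
  have := congrArg Polynomial.natDegree h3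
  simp [Polynomial.natDegree_X_pow] at this
  omega

lemma qp_ne_zero (n : ℕ) : qp n ≠ 0 := by
  apply Finset.prod_ne_zero_iff.2
  intro i _
  exact one_sub_qq_pow_ne_zero _ (Nat.succ_pos i)

lemma qp_succ (m : ℕ) : qp (m + 1) = qp m * (1 - qq ^ (m + 1)) := Finset.prod_range_succ _ _

lemma qpz_neg {n : ℤ} (h : n < 0) : qpz n = 0 := by simp [qpz, not_le.2 h]

lemma qpz_ne_zero {n : ℤ} (h : 0 ≤ n) : qpz n ≠ 0 := by
  simp only [qpz, if_pos h]; exact qp_ne_zero _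

lemma qpz_succ {m : ℤ} (h : 0 ≤ m) : qpz (m + 1) = qpz m * (1 - qq ^ (m + 1)) := by
  have h1 : (0:ℤ) ≤ m + 1 := by omega
  simp only [qpz, if_pos h, if_pos h1]
  have h2 : (m + 1).toNat = m.toNat + 1 := by omega
  rw [h2, qp_succ]
  congr 2
  rw [← zpow_natCast]
  congr 1
  omega

/-- The summand of `qT`. -/
noncomputable def fT (n d : ℤ) (L : ℕ) (k : ℕ) : RatFunc ℚ :=
  qq ^ ((k : ℤ) * ((k : ℤ) + d - n)) * qp L /
    (qp k * qpz ((k : ℤ) + d) * qpz ((L : ℤ) - 2 * k - d))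

lemma qT_eq_sum (n d : ℤ) (L : ℕ) :
    qT n d L = ∑ k ∈ Finset.range (L + 1), fT n d L k := rfl

lemma fT_zero_mid {n d : ℤ} {L k : ℕ} (h : (k : ℤ) + d < 0) : fT n d L k = 0 := by
  simp [fT, qpz_neg h]

lemma fT_zero_right {n d : ℤ} {L k : ℕ} (h : (L : ℤ) - 2 * k - d < 0) : fT n d L k = 0 := by
  simp [fT, qpz_neg h]

lemma bracket (M d k : ℤ) :
    1 - qq ^ (M + 1) =
      qq ^ (M + 1 - d - 2 * k) * (1 - qq ^ (k + d)) + (1 - qq ^ (M + 1 - 2 * k - d)) +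
        qq ^ (M + 1 - k) * (1 - qq ^ k) := by
  have e1 : qq ^ (M + 1 - d - 2 * k) * qq ^ (k + d) = qq ^ (M + 1 - k) := by
    rw [← zpow_add₀ qq_ne_zero]; congr 1; ring
  have e2 : qq ^ (M + 1 - k) * qq ^ k = qq ^ (M + 1) := by
    rw [← zpow_add₀ qq_ne_zero]; congr 1; ring
  have e3 : qq ^ (M + 1 - d - 2 * k) = qq ^ (M + 1 - 2 * k - d) := by congr 1; ring
  linear_combination e1 + e2 - e3

lemma cancel_helper (b : ℤ) (N D u : RatFunc ℚ) (hu : u ≠ 0) :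
    N / (D * u) * (qq ^ b * u) = qq ^ b * (N / D) := by
  rcases eq_or_ne D 0 with hD | hD
  · simp [hD]
  · field_simp

lemma cancel_helper' (N D u : RatFunc ℚ) (hu : u ≠ 0) :
    N / (D * u) * u = N / D := by
  rcases eq_or_ne D 0 with hD | hD
  · simp [hD]
  · field_simp

lemma zpow_shuffle (a b c e : ℤ) (h : a + b = c + e) (Y Z : RatFunc ℚ) :
    qq ^ a * (qq ^ b * Y / Z) = qq ^ c * (qq ^ e * Y / Z) := by
  rw [mul_div_assoc, mul_div_assoc, ← mul_assoc, ← mul_assoc,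
    ← zpow_add₀ qq_ne_zero, ← zpow_add₀ qq_ne_zero, h]

/-- The "common factor" term. -/
noncomputable def tt (n d : ℤ) (M k : ℕ) : RatFunc ℚ :=
  qq ^ ((k : ℤ) * ((k : ℤ) + d - n)) * qp M /
    (qp k * qpz ((k : ℤ) + d) * qpz ((M : ℤ) + 1 - 2 * k - d))

lemma ha_lemma (n d : ℤ) (M k : ℕ) :
    fT n d (M + 1) k = tt n d M k * (1 - qq ^ ((M : ℤ) + 1)) := by
  simp only [fT, tt]
  rw [show ((M + 1 : ℕ) : ℤ) - 2 * (k : ℤ) - d = (M : ℤ) + 1 - 2 * (k : ℤ) - d from by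
    push_cast; ring]
  rw [qp_succ]
  rw [show (1 : RatFunc ℚ) - qq ^ (M + 1) = 1 - qq ^ ((M : ℤ) + 1) from by
    rw [show ((M : ℤ) + 1) = ((M + 1 : ℕ) : ℤ) from by push_cast; ring, zpow_natCast]]
  ring

lemma one_sub_qq_zpow_ne_zero (m : ℤ) (hm : 0 < m) : (1 : RatFunc ℚ) - qq ^ m ≠ 0 := by
  have h : qq ^ m = qq ^ m.toNat := by rw [← zpow_natCast]; congr 1; omega
  rw [h]
  exact one_sub_qq_pow_ne_zero _ (by omega)

lemma hb_lemma (n d : ℤ) (M k : ℕ) (h1 : 0 ≤ (k : ℤ) + d) :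
    qq ^ ((M : ℤ) + 1 - d) * fT (n + 1) (d - 1) M k =
      tt n d M k * (qq ^ ((M : ℤ) + 1 - d - 2 * (k : ℤ)) * (1 - qq ^ ((k : ℤ) + d))) := by
  rcases eq_or_lt_of_le h1 with h | h
  · rw [fT_zero_mid (show (k : ℤ) + (d - 1) < 0 by omega), ← h]
    simp
  · simp only [fT, tt]
    rw [show (k : ℤ) + (d - 1) = (k : ℤ) + d - 1 from by ring,
      show (M : ℤ) - 2 * (k : ℤ) - (d - 1) = (M : ℤ) + 1 - 2 * (k : ℤ) - d from by ring]
    have hfac : qpz ((k : ℤ) + d) = qpz ((k : ℤ) + d - 1) * (1 - qq ^ ((k : ℤ) + d)) := by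
      have h5 := qpz_succ (m := (k : ℤ) + d - 1) (by omega)
      rwa [show (k : ℤ) + d - 1 + 1 = (k : ℤ) + d from by ring] at h5
    rw [hfac]
    rw [show qp k * (qpz ((k : ℤ) + d - 1) * (1 - qq ^ ((k : ℤ) + d))) *
          qpz ((M : ℤ) + 1 - 2 * (k : ℤ) - d) =
        qp k * qpz ((k : ℤ) + d - 1) * qpz ((M : ℤ) + 1 - 2 * (k : ℤ) - d) *
          (1 - qq ^ ((k : ℤ) + d)) from by ring]
    rw [cancel_helper _ _ _ _ (one_sub_qq_zpow_ne_zero _ h)]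
    exact zpow_shuffle _ _ _ _ (by ring) _ _

lemma hc_lemma (n d : ℤ) (M k : ℕ) (h2 : 0 ≤ (M : ℤ) + 1 - 2 * k - d) :
    fT n d M k = tt n d M k * (1 - qq ^ ((M : ℤ) + 1 - 2 * (k : ℤ) - d)) := by
  rcases eq_or_lt_of_le h2 with h | h
  · rw [fT_zero_right (show (M : ℤ) - 2 * (k : ℤ) - d < 0 by omega), ← h]
    simp
  · simp only [fT, tt]
    have hfac : qpz ((M : ℤ) + 1 - 2 * (k : ℤ) - d) =
        qpz ((M : ℤ) - 2 * (k : ℤ) - d) * (1 - qq ^ ((M : ℤ) + 1 - 2 * (k : ℤ) - d)) := by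
      have h5 := qpz_succ (m := (M : ℤ) - 2 * (k : ℤ) - d) (by omega)
      rwa [show (M : ℤ) - 2 * (k : ℤ) - d + 1 = (M : ℤ) + 1 - 2 * (k : ℤ) - d from by ring] at h5
    rw [hfac]
    rw [show qp k * qpz ((k : ℤ) + d) *
          (qpz ((M : ℤ) - 2 * (k : ℤ) - d) * (1 - qq ^ ((M : ℤ) + 1 - 2 * (k : ℤ) - d))) =
        qp k * qpz ((k : ℤ) + d) * qpz ((M : ℤ) - 2 * (k : ℤ) - d) *
          (1 - qq ^ ((M : ℤ) + 1 - 2 * (k : ℤ) - d)) from by ring]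
    rw [cancel_helper' _ _ _ (one_sub_qq_zpow_ne_zero _ h)]

lemma hd_lemma (n d : ℤ) (M k : ℕ) :
    qq ^ ((M : ℤ) + 1 + d - n) * (if k = 0 then 0 else fT n (d + 1) M (k - 1)) =
      tt n d M k * (qq ^ ((M : ℤ) + 1 - (k : ℤ)) * (1 - qq ^ (k : ℤ))) := by
  rcases k with _ | j
  · simp
  · rw [if_neg (Nat.succ_ne_zero j), Nat.add_sub_cancel]
    simp only [fT, tt]
    rw [show (j : ℤ) + (d + 1) = ((j + 1 : ℕ) : ℤ) + d from by push_cast; ring,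
      show (M : ℤ) - 2 * (j : ℤ) - (d + 1) = (M : ℤ) + 1 - 2 * ((j + 1 : ℕ) : ℤ) - d from by
        push_cast; ring]
    rw [qp_succ j]
    rw [show (1 : RatFunc ℚ) - qq ^ (((j + 1 : ℕ)) : ℤ) = 1 - qq ^ (j + 1) from by
      rw [zpow_natCast]]
    rw [show qp j * (1 - qq ^ (j + 1)) * qpz (((j + 1 : ℕ) : ℤ) + d) *
          qpz ((M : ℤ) + 1 - 2 * ((j + 1 : ℕ) : ℤ) - d) =
        qp j * qpz (((j + 1 : ℕ) : ℤ) + d) * qpz ((M : ℤ) + 1 - 2 * ((j + 1 : ℕ) : ℤ) - d) *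
          (1 - qq ^ (j + 1)) from by ring]
    rw [cancel_helper _ _ _ _ (one_sub_qq_pow_ne_zero _ (Nat.succ_pos j))]
    exact zpow_shuffle _ _ _ _ (by push_cast; ring) _ _

lemma key (n d : ℤ) (M k : ℕ) :
    fT n d (M + 1) k =
      qq ^ ((M : ℤ) + 1 - d) * fT (n + 1) (d - 1) M k + fT n d M k +
        qq ^ ((M : ℤ) + 1 + d - n) * (if k = 0 then 0 else fT n (d + 1) M (k - 1)) := by
  rcases lt_or_ge ((k : ℤ) + d) 0 with h1 | h1
  · have hz : (if k = 0 then 0 else fT n (d + 1) M (k - 1)) = (0 : RatFunc ℚ) := by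
      rcases k with _ | j
      · simp
      · rw [if_neg (Nat.succ_ne_zero j), Nat.add_sub_cancel]
        apply fT_zero_mid
        push_cast at h1 ⊢
        omega
    rw [fT_zero_mid h1, fT_zero_mid (show (k : ℤ) + (d - 1) < 0 by omega),
      fT_zero_mid (n := n) (d := d) (L := M) h1, hz]
    simp
  rcases lt_or_ge ((M : ℤ) + 1 - 2 * k - d) 0 with h2 | h2
  · have hz : (if k = 0 then 0 else fT n (d + 1) M (k - 1)) = (0 : RatFunc ℚ) := by
      rcases k with _ | j
      · simp
      · rw [if_neg (Nat.succ_ne_zero j), Nat.add_sub_cancel]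
        apply fT_zero_right
        push_cast at h2 ⊢
        omega
    rw [fT_zero_right (show ((M + 1 : ℕ) : ℤ) - 2 * (k : ℤ) - d < 0 by push_cast; omega),
      fT_zero_right (show (M : ℤ) - 2 * (k : ℤ) - (d - 1) < 0 by omega),
      fT_zero_right (show (M : ℤ) - 2 * (k : ℤ) - d < 0 by omega), hz]
    simp
  · rw [ha_lemma, hb_lemma n d M k h1, hc_lemma n d M k h2, hd_lemma n d M k,
      bracket (M : ℤ) d (k : ℤ)]
    ring

/-- For `L > 0`:
`T(n,d,L) = q^{L-d} T(n+1,d-1,L-1) + T(n,d,L-1) + q^{L+d-n} T(n,d+1,L-1)`. -/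
theorem qT_recurrence₁ (n d : ℤ) (L : ℕ) (hL : 0 < L) :
    qT n d L =
      qq ^ ((L : ℤ) - d) * qT (n + 1) (d - 1) (L - 1) + qT n d (L - 1) +
        qq ^ ((L : ℤ) + d - n) * qT n (d + 1) (L - 1) := by
  obtain ⟨M, rfl⟩ : ∃ M, L = M + 1 := ⟨L - 1, by omega⟩
  simp only [Nat.add_sub_cancel]
  push_cast
  have z1 : fT (n + 1) (d - 1) M (M + 1) = 0 := by
    rcases lt_or_ge ((M : ℤ) + d) 0 with h | h
    · exact fT_zero_mid (by push_cast; omega)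
    · exact fT_zero_right (by push_cast; omega)
  have z2 : fT n d M (M + 1) = 0 := by
    rcases lt_or_ge ((M : ℤ) + 1 + d) 0 with h | h
    · exact fT_zero_mid (by push_cast; omega)
    · exact fT_zero_right (by push_cast; omega)
  have h1 : ∑ k ∈ Finset.range (M + 1 + 1), fT (n + 1) (d - 1) M k = qT (n + 1) (d - 1) M := by
    rw [Finset.sum_range_succ, z1, add_zero, qT_eq_sum]
  have h2 : ∑ k ∈ Finset.range (M + 1 + 1), fT n d M k = qT n d M := by
    rw [Finset.sum_range_succ, z2, add_zero, qT_eq_sum]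
  have h3 : (∑ k ∈ Finset.range (M + 1 + 1), (if k = 0 then 0 else fT n (d + 1) M (k - 1)))
      = qT n (d + 1) M := by
    rw [Finset.sum_range_succ', qT_eq_sum]
    simp
  rw [qT_eq_sum n d (M + 1), ← h1, ← h2, ← h3, Finset.mul_sum, Finset.mul_sum,
    ← Finset.sum_add_distrib, ← Finset.sum_add_distrib]
  exact Finset.sum_congr rfl fun k _ => key n d M k
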